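/- For every n ≥ 1 and every positive braid β ∈ B_n^+, the value tr_n^0(β) of the Ocneanu trace on the image of β in the Hecke algebra H(B_n) belongs to the subring ℤ[q, z] of 𝕂(z). -/

import Mathlib

noncomputable section
open scoped Classical

/-- `𝕂 = ℂ(q)`. -/
abbrev K : Type := RatFunc ℂ
/-- `𝕂(z)`. -/
abbrev Kz : Type := RatFunc K
/-- the variable `q`. -/
def q : K := RatFunc.X
/-- the variable `z`. -/
def z : Kz := RatFunc.X

/-- The braid relations, as elements of the free group on `σ_1, …, σ_{n-1}`
(0-indexed `i ↔ σ_{i+1}`). -/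
def braidRels (n : ℕ) : Set (FreeGroup (Fin (n - 1))) :=
  {r | (∃ i j : Fin (n - 1), ((i : ℕ) + 1 = (j : ℕ) ∨ (j : ℕ) + 1 = (i : ℕ)) ∧
          r = FreeGroup.of i * FreeGroup.of j * FreeGroup.of i *
              (FreeGroup.of j * FreeGroup.of i * FreeGroup.of j)⁻¹) ∨
       (∃ i j : Fin (n - 1), ((i : ℕ) + 2 ≤ (j : ℕ) ∨ (j : ℕ) + 2 ≤ (i : ℕ)) ∧
          r = FreeGroup.of i * FreeGroup.of j * (FreeGroup.of j * FreeGroup.of i)⁻¹)}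

/-- The braid group `B_n` on `n` strands. -/
def BG (n : ℕ) : Type := PresentedGroup (braidRels n)

instance (n : ℕ) : Group (BG n) := inferInstanceAs (Group (PresentedGroup _))

/-- The standard generator `σ_{i+1}` of the braid group. -/
def bgen {n : ℕ} (i : Fin (n - 1)) : BG n := PresentedGroup.of i

lemma bgen_braid {m : ℕ} (i j : Fin (m - 1)) (h : (i : ℕ) + 1 = (j : ℕ) ∨ (j : ℕ) + 1 = (i : ℕ)) :
    bgen (n := m) i * bgen j * bgen i = bgen j * bgen i * bgen j := by
  have key : PresentedGroup.mk (braidRels m)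
      (FreeGroup.of i * FreeGroup.of j * FreeGroup.of i *
        (FreeGroup.of j * FreeGroup.of i * FreeGroup.of j)⁻¹) = 1 :=
    (QuotientGroup.eq_one_iff _).mpr (Subgroup.subset_normalClosure (Or.inl ⟨i, j, h, rfl⟩))
  rw [map_mul, map_inv, mul_inv_eq_one] at key
  simp only [map_mul] at key
  exact key

lemma bgen_comm {m : ℕ} (i j : Fin (m - 1)) (h : (i : ℕ) + 2 ≤ (j : ℕ) ∨ (j : ℕ) + 2 ≤ (i : ℕ)) :
    bgen (n := m) i * bgen j = bgen j * bgen i := by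
  have key : PresentedGroup.mk (braidRels m)
      (FreeGroup.of i * FreeGroup.of j * (FreeGroup.of j * FreeGroup.of i)⁻¹) = 1 :=
    (QuotientGroup.eq_one_iff _).mpr (Subgroup.subset_normalClosure (Or.inr ⟨i, j, h, rfl⟩))
  rw [map_mul, map_inv, mul_inv_eq_one] at key
  simp only [map_mul] at key
  exact key

/-- The standard inclusion `B_n → B_{n+1}`. -/
def inclB {n : ℕ} : BG n →* BG (n + 1) :=
  PresentedGroup.toGroup (f := fun i : Fin (n - 1) => bgen (Fin.castLE (by omega) i))
    (by
      rintro r (⟨i, j, hij, rfl⟩ | ⟨i, j, hij, rfl⟩) <;>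
        simp only [map_mul, map_inv, FreeGroup.lift_apply_of, mul_inv_eq_one]
      · exact bgen_braid _ _ (by simpa using hij)
      · exact bgen_comm _ _ (by simpa using hij))

/-- The positive braid monoid `B_n⁺`, the submonoid of `B_n` generated by the `σ_i`. -/
def Bplus (n : ℕ) : Submonoid (BG n) := Submonoid.closure (Set.range (bgen (n := n)))

/-- The monoid algebra `𝕂[B_n]`. -/
abbrev MAB (n : ℕ) : Type := MonoidAlgebra K (BG n)

/-- The Hecke relations `σ_k² = (q-1)σ_k + q`. -/
def hrelB (n : ℕ) : MAB n → MAB n → Prop := fun x y =>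
  ∃ i : Fin (n - 1), x = (MonoidAlgebra.of K (BG n) (bgen i)) ^ 2 ∧
    y = (q - 1) • MonoidAlgebra.of K (BG n) (bgen i) + q • 1

/-- The Hecke algebra `H(B_n)` of the braid group / symmetric group. -/
def HB (n : ℕ) : Type := RingQuot (hrelB n)

instance (n : ℕ) : Ring (HB n) := inferInstanceAs (Ring (RingQuot (hrelB n)))
instance (n : ℕ) : Algebra K (HB n) := inferInstanceAs (Algebra K (RingQuot (hrelB n)))

/-- The natural map `B_n → H(B_n)`. -/
def ιHB {n : ℕ} (β : BG n) : HB n := RingQuot.mkAlgHom K (hrelB n) (MonoidAlgebra.of K (BG n) β)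

/-- The generator `σ_n` of `B_{n+2}` (0-indexed `n`), used in the Markov condition. -/
def lastGenB (n : ℕ) : Fin ((n + 2) - 1) := ⟨n, by omega⟩

/-- A collection of 𝕂-linear maps `H(B_n) → 𝕂(z)`, `n ≥ 1`
(index `n` in the collection corresponds to `n+1` strands). -/
abbrev TRBc : Type := ∀ n : ℕ, HB (n + 1) →ₗ[K] Kz

/-- The Markov trace conditions for the tower of Hecke algebras `{H(B_n)}ₙ`. -/
def IsMarkovB (T : TRBc) : Prop :=
  (∀ (n : ℕ) (α β : BG (n + 1)), T n (ιHB (α * β)) = T n (ιHB (β * α))) ∧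
  (∀ (n : ℕ) (β : BG (n + 1)), T (n + 1) (ιHB (inclB β)) = T n (ιHB β)) ∧
  (∀ (n : ℕ) (β : BG (n + 1)),
    T (n + 1) (ιHB (inclB β * bgen (lastGenB n))) = z * T n (ιHB β))

/-- The subring `ℤ[q] ⊆ 𝕂`. -/
def Zq : Subring K := Subring.closure {q}

/-- The subring `ℤ[q, z] ⊆ 𝕂(z)`. -/
def Rqz : Subring Kz := Subring.closure {algebraMap K Kz q, z}

/-- Evaluation at `z = 0` of a rational function in `z`. -/
def evalz0 : Kz → K := RatFunc.eval (RingHom.id K) 0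
/-! ### Basic auxiliary lemmas -/

lemma ιHB_mul {n : ℕ} (α β : BG n) : ιHB (α * β) = ιHB α * ιHB β := by
  unfold ιHB; rw [map_mul, map_mul]; rfl

lemma ιHB_one {n : ℕ} : ιHB (1 : BG n) = 1 := by
  unfold ιHB; rw [map_one, map_one]; rfl

lemma hecke {n : ℕ} (i : Fin (n - 1)) :
    ιHB (bgen i) * ιHB (bgen i) = (q - 1) • ιHB (bgen i) + q • (1 : HB n) := by
  have h := RingQuot.mkAlgHom_rel K (s := hrelB n)
    (x := (MonoidAlgebra.of K (BG n) (bgen i)) ^ 2)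
    (y := (q - 1) • MonoidAlgebra.of K (BG n) (bgen i) + q • 1) ⟨i, rfl, rfl⟩
  rw [map_pow, map_add, map_smul, map_smul, map_one, pow_two] at h
  exact h

def gg (N : ℕ) (i : ℕ) : BG (N + 1) :=
  if h : i < N then bgen ⟨i, by omega⟩ else 1

def wp (N : ℕ) (w : List ℕ) : BG (N + 1) := (w.map (gg N)).prod

def WH (N : ℕ) (w : List ℕ) : HB (N + 1) := ιHB (wp N w)

lemma wp_nil (N : ℕ) : wp N [] = 1 := rfl
lemma wp_cons (N : ℕ) (i : ℕ) (w : List ℕ) : wp N (i :: w) = gg N i * wp N w := by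
  simp [wp]
lemma wp_append (N : ℕ) (a b : List ℕ) : wp N (a ++ b) = wp N a * wp N b := by
  simp [wp]

lemma WH_nil (N : ℕ) : WH N [] = 1 := by rw [WH, wp_nil, ιHB_one]
lemma WH_cons (N : ℕ) (i : ℕ) (w : List ℕ) :
    WH N (i :: w) = ιHB (gg N i) * WH N w := by rw [WH, wp_cons, ιHB_mul]; rfl
lemma WH_append (N : ℕ) (a b : List ℕ) : WH N (a ++ b) = WH N a * WH N b := by
  rw [WH, WH, WH, wp_append, ιHB_mul]

lemma gg_comm {N : ℕ} {i j : ℕ} (h : i + 2 ≤ j ∨ j + 2 ≤ i) :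
    gg N i * gg N j = gg N j * gg N i := by
  unfold gg
  split_ifs with h1 h2 h2
  · exact bgen_comm _ _ h
  · simp
  · simp
  · simp

lemma gg_braid {N : ℕ} {i j : ℕ} (hi : i < N) (hj : j < N) (h : i + 1 = j ∨ j + 1 = i) :
    gg N i * gg N j * gg N i = gg N j * gg N i * gg N j := by
  unfold gg; rw [dif_pos hi, dif_pos hj]
  exact bgen_braid _ _ h

lemma gg_hecke {N : ℕ} {i : ℕ} (hi : i < N) :
    ιHB (gg N i) * ιHB (gg N i) = (q - 1) • ιHB (gg N i) + q • (1 : HB (N + 1)) := by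
  rw [gg, dif_pos hi]; exact hecke _

lemma wp_comm {N : ℕ} {j : ℕ} {A : List ℕ} (hA : ∀ i ∈ A, i + 2 ≤ j) :
    wp N A * gg N j = gg N j * wp N A := by
  induction A with
  | nil => rw [wp_nil, one_mul, mul_one]
  | cons a A ih =>
    rw [wp_cons, mul_assoc, ih (fun i hi => hA i (List.mem_cons_of_mem a hi)),
      ← mul_assoc, gg_comm (Or.inl (hA a List.mem_cons_self)), mul_assoc]

lemma gg_wp_comm' {N j : ℕ} {A : List ℕ} (hA : ∀ i ∈ A, i + 2 ≤ j) (x : BG (N + 1)) :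
    gg N j * (wp N A * x) = wp N A * (gg N j * x) := by
  rw [← mul_assoc, ← wp_comm hA, mul_assoc]

lemma gg_braid' {N i j : ℕ} (hi : i < N) (hj : j < N) (h : i + 1 = j ∨ j + 1 = i)
    (x : BG (N + 1)) :
    gg N i * (gg N j * (gg N i * x)) = gg N j * (gg N i * (gg N j * x)) := by
  rw [← mul_assoc, ← mul_assoc, gg_braid hi hj h, mul_assoc, mul_assoc]

lemma q_mem_Zq : q ∈ Zq := Subring.subset_closure rfl
lemma qm1_mem_Zq : q - 1 ∈ Zq := sub_mem q_mem_Zq (one_mem _)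
lemma q_mem_Rqz : algebraMap K Kz q ∈ Rqz := Subring.subset_closure (Or.inl rfl)
lemma z_mem_Rqz : z ∈ Rqz := Subring.subset_closure (Or.inr rfl)
lemma Zq_map {c : K} (hc : c ∈ Zq) : algebraMap K Kz c ∈ Rqz := by
  have h : Zq ≤ Rqz.comap (algebraMap K Kz) := by
    rw [Zq, Subring.closure_le]
    intro x hx
    rw [Set.mem_singleton_iff] at hx
    subst hx
    exact q_mem_Rqz
  exact h hc

lemma first_split {v : ℕ} : ∀ {w : List ℕ}, v ∈ w → ∃ u t, w = u ++ v :: t ∧ v ∉ u := by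
  intro w hw
  induction w with
  | nil => cases hw
  | cons a w ih =>
    by_cases hav : v = a
    · exact ⟨[], w, by simp [hav], by simp⟩
    · obtain ⟨u, t, h1, hu⟩ := ih ((List.mem_cons.mp hw).resolve_left hav)
      exact ⟨a :: u, t, by rw [h1]; rfl, by simp [hav, hu]⟩

lemma inclB_bgen {n : ℕ} (j : Fin (n - 1)) :
    inclB (bgen j) = bgen (Fin.castLE (by omega) j) := by
  simp only [inclB, bgen]
  exact PresentedGroup.toGroup.of _

lemma inclB_gg {n : ℕ} {i : ℕ} (hi : i < n) : inclB (gg n i) = gg (n + 1) i := by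
  rw [gg, dif_pos hi, gg, dif_pos (by omega : i < n + 1), inclB_bgen]
  rfl

lemma inclB_wp {n : ℕ} {w : List ℕ} (hw : ∀ i ∈ w, i < n) :
    inclB (wp n w) = wp (n + 1) w := by
  induction w with
  | nil => rw [wp_nil, wp_nil, map_one]
  | cons a w ih =>
    rw [wp_cons, wp_cons, map_mul, ih (fun i hi => hw i (List.mem_cons_of_mem a hi)),
      inclB_gg (hw a List.mem_cons_self)]

lemma lastGen_gg (n : ℕ) : bgen (lastGenB n) = gg (n + 1) n := by
  rw [gg, dif_pos (by omega : n < n + 1)]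
  rfl
/-! ### Structural decomposition in the Hecke algebra -/

def GenS (N m : ℕ) : Set (HB (N + 1)) :=
  {y | ∃ A B : List ℕ, (∀ i ∈ A, i + 1 < m) ∧ (∀ i ∈ B, i + 1 < m) ∧
      (y = WH N A ∨ (1 ≤ m ∧ y = WH N (A ++ (m - 1) :: B)))}

lemma zq_smul_eq {c : K} (hc : c ∈ Zq) (x : HB (N + 1)) :
    c • x = (⟨c, hc⟩ : Zq) • x := rfl

lemma smul_Kz (c : K) (r : Kz) : c • r = algebraMap K Kz c * r := by
  rw [RatFunc.smul_eq_C_mul, RatFunc.algebraMap_eq_C]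
lemma SL (N : ℕ) : ∀ m, m ≤ N → ∀ w : List ℕ, (∀ i ∈ w, i < m) →
    WH N w ∈ Submodule.span Zq (GenS N m) := by
  intro m
  induction m with
  | zero =>
    intro _ w hw
    have hwnil : w = [] := by
      cases w with
      | nil => rfl
      | cons a w => exact absurd (hw a List.mem_cons_self) (by omega)
    subst hwnil
    exact Submodule.subset_span ⟨[], [], by simp, by simp, Or.inl rfl⟩
  | succ m ih =>
    intro hm
    have hmN : m < N := by omega
    suffices H : ∀ k, ∀ w : List ℕ, (∀ i ∈ w, i < m + 1) → w.count m ≤ k →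
        WH N w ∈ Submodule.span Zq (GenS N (m + 1)) by
      intro w hw; exact H (w.count m) w hw le_rfl
    intro k
    induction k with
    | zero =>
      intro w hw hc
      apply Submodule.subset_span
      refine ⟨w, [], ?_, by simp, Or.inl rfl⟩
      intro i hi
      have h1 := hw i hi
      have h2 : i ≠ m := by
        intro h; subst h
        rw [Nat.le_zero, List.count_eq_zero] at hc
        exact hc hi
      omega
    | succ k ihk =>
      intro w hw hc
      rcases Nat.lt_or_ge (w.count m) (k + 1) with hlt | hge
      · exact ihk w hw (by omega)
      have hcount : w.count m = k + 1 := le_antisymm hc hge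
      have hmem : m ∈ w := by
        have : 0 < w.count m := by omega
        exact List.count_pos_iff.mp this
      obtain ⟨u, t, rfl, hu⟩ := first_split hmem
      have hcu : u.count m = 0 := List.count_eq_zero.mpr hu
      have hct : t.count m = k := by
        have := hcount
        rw [List.count_append, List.count_cons_self, hcu] at this
        omega
      rcases Nat.eq_zero_or_pos k with hk0 | hkpos
      · -- single occurrence of m
        subst hk0
        have hut : t.count m = 0 := hct
        apply Submodule.subset_span
        refine ⟨u, t, ?_, ?_, Or.inr ⟨by omega, by simp⟩⟩
        · intro i hi
          have h1 := hw i (by simp [hi])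
          have h2 : i ≠ m := fun h => hu (h ▸ hi)
          omega
        · intro i hi
          have h1 := hw i (by simp [hi])
          have h2 : i ≠ m := by
            intro h; subst h
            rw [List.count_eq_zero] at hut
            exact hut hi
          omega
      · -- at least two occurrences of m
        have hmt : m ∈ t := by
          have : 0 < t.count m := by omega
          exact List.count_pos_iff.mp this
        obtain ⟨e, d, rfl, he⟩ := first_split hmt
        have hce : e.count m = 0 := List.count_eq_zero.mpr he
        have hcd : d.count m = k - 1 := by
          rw [List.count_append, List.count_cons_self, hce] at hct
          omega
        have hbe : ∀ i ∈ e, i < m := by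
          intro i hi
          have h1 := hw i (by simp [hi])
          have h2 : i ≠ m := fun h => he (h ▸ hi)
          omega
        have hbu : ∀ i ∈ u, i < m + 1 := fun i hi => hw i (by simp [hi])
        have hbd : ∀ i ∈ d, i < m + 1 := fun i hi => hw i (by simp [hi])
        have hspan := ih (le_of_lt hmN) e hbe
        have hW : WH N (u ++ m :: (e ++ m :: d)) =
            (WH N u * ιHB (gg N m)) * WH N e * (ιHB (gg N m) * WH N d) := by
          simp only [WH_append, WH_cons, mul_assoc]
        rw [hW]
        refine Submodule.span_induction
          (p := fun x _ => (WH N u * ιHB (gg N m)) * x * (ιHB (gg N m) * WH N d) ∈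
            Submodule.span Zq (GenS N (m + 1))) ?_ ?_ ?_ ?_ hspan
        · -- generators
          rintro x ⟨A, B, hA, hB, (rfl | ⟨hm1, rfl⟩)⟩
          · -- x = WH N A
            have hA2 : ∀ i ∈ A, i + 2 ≤ m := fun i hi => by have := hA i hi; omega
            have e1 : (WH N u * ιHB (gg N m)) * WH N A * (ιHB (gg N m) * WH N d)
                = WH N (u ++ A) * (ιHB (gg N m) * ιHB (gg N m)) * WH N d := by
              simp only [WH, ← ιHB_mul, wp_append]
              refine congrArg ιHB ?_
              rw [mul_assoc (wp N u) (gg N m) (wp N A), ← wp_comm hA2]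
              simp only [mul_assoc]
            have e2 : WH N (u ++ A) * (ιHB (gg N m) * ιHB (gg N m)) * WH N d
                = (q - 1) • WH N (u ++ A ++ m :: d) + q • WH N (u ++ A ++ d) := by
              rw [gg_hecke hmN, mul_add, add_mul, mul_smul_comm, smul_mul_assoc,
                mul_smul_comm, smul_mul_assoc, mul_one]
              congr 1
              · congr 1
                simp only [WH_append, WH_cons, mul_assoc]
              · congr 1
                rw [WH_append, WH_append, WH_append]
            rw [e1, e2]
            refine add_mem ?_ ?_
            · rw [zq_smul_eq qm1_mem_Zq]
              refine Submodule.smul_mem _ _ (ihk _ ?_ ?_)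
              · intro i hi
                simp only [List.mem_append, List.mem_cons] at hi
                rcases hi with (hi | hi) | hi | hi
                · exact hbu i hi
                · have := hA i hi; omega
                · omega
                · exact hbd i hi
              · rw [List.count_append, List.count_append, List.count_cons_self, hcu, hcd,
                  List.count_eq_zero.mpr (fun h => by have := hA m h; omega)]
                omega
            · rw [zq_smul_eq q_mem_Zq]
              refine Submodule.smul_mem _ _ (ihk _ ?_ ?_)
              · intro i hi
                simp only [List.mem_append] at hi
                rcases hi with (hi | hi) | hi
                · exact hbu i hi
                · have := hA i hi; omega
                · exact hbd i hi
              · rw [List.count_append, List.count_append, hcu, hcd,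
                  List.count_eq_zero.mpr (fun h => by have := hA m h; omega)]
                omega
          · -- x = WH N (A ++ (m-1) :: B)
            have hA2 : ∀ i ∈ A, i + 2 ≤ m := fun i hi => by have := hA i hi; omega
            have hB2 : ∀ i ∈ B, i + 2 ≤ m := fun i hi => by have := hB i hi; omega
            have e1 : (WH N u * ιHB (gg N m)) * WH N (A ++ (m - 1) :: B) *
                  (ιHB (gg N m) * WH N d)
                = WH N (u ++ A ++ (m - 1) :: m :: (m - 1) :: (B ++ d)) := by
              simp only [WH, ← ιHB_mul, wp_append, wp_cons]
              refine congrArg ιHB ?_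
              simp only [mul_assoc]
              rw [gg_wp_comm' hA2, ← gg_wp_comm' hB2 (wp N d),
                gg_braid' hmN (by omega : m - 1 < N) (Or.inr (by omega))]
            rw [e1]
            refine ihk _ ?_ ?_
            · intro i hi
              simp only [List.mem_append, List.mem_cons] at hi
              rcases hi with ((hi | hi) | hi | hi | hi | hi | hi)
              · exact hbu i hi
              · have := hA i hi; omega
              · omega
              · omega
              · omega
              · have := hB i hi; omega
              · exact hbd i hi
            · have hAm : A.count m = 0 :=
                List.count_eq_zero.mpr (fun h => by have := hA m h; omega)
              have hBm : B.count m = 0 :=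
                List.count_eq_zero.mpr (fun h => by have := hB m h; omega)
              rw [List.count_append, List.count_append,
                List.count_cons_of_ne (by omega : m - 1 ≠ m), List.count_cons_self,
                List.count_cons_of_ne (by omega : m - 1 ≠ m), List.count_append,
                hcu, hcd, hAm, hBm]
              omega
        · simp only [mul_zero, zero_mul]
          exact Submodule.zero_mem _
        · intro x y _ _ hx hy
          simp only [mul_add, add_mul]
          exact Submodule.add_mem _ hx hy
        · intro a x _ hx
          rw [Subring.smul_def, mul_smul_comm, smul_mul_assoc, zq_smul_eq (SetLike.coe_mem a)]
          exact Submodule.smul_mem _ _ hx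
lemma CL (T : TRBc) (hT : IsMarkovB T) (hnorm : T 0 1 = 1) :
    ∀ n, ∀ w : List ℕ, (∀ i ∈ w, i < n) → T n (WH n w) ∈ Rqz := by
  intro n
  induction n with
  | zero =>
    intro w hw
    have hwnil : w = [] := by
      cases w with
      | nil => rfl
      | cons a w => exact absurd (hw a List.mem_cons_self) (by omega)
    subst hwnil
    rw [WH_nil, hnorm]
    exact one_mem _
  | succ n ih =>
    suffices H : ∀ k, ∀ w : List ℕ, (∀ i ∈ w, i < n + 1) → w.count n ≤ k →
        T (n + 1) (WH (n + 1) w) ∈ Rqz by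
      intro w hw; exact H (w.count n) w hw le_rfl
    intro k
    induction k with
    | zero =>
      intro w hw hc
      have hw' : ∀ i ∈ w, i < n := by
        intro i hi
        have h1 := hw i hi
        have h2 : i ≠ n := by
          intro h; subst h
          rw [Nat.le_zero, List.count_eq_zero] at hc
          exact hc hi
        omega
      rw [WH, ← inclB_wp hw', hT.2.1 n (wp n w)]
      exact ih w hw'
    | succ k ihk =>
      intro w hw hc
      rcases Nat.lt_or_ge (w.count n) (k + 1) with hlt | hge
      · exact ihk w hw (by omega)
      have hcount : w.count n = k + 1 := le_antisymm hc hge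
      have hmem : n ∈ w := by
        have : 0 < w.count n := by omega
        exact List.count_pos_iff.mp this
      obtain ⟨u, t, rfl, hu⟩ := first_split hmem
      have hcu : u.count n = 0 := List.count_eq_zero.mpr hu
      have hct : t.count n = k := by
        have := hcount
        rw [List.count_append, List.count_cons_self, hcu] at this
        omega
      rcases Nat.eq_zero_or_pos k with hk0 | hkpos
      · -- single occurrence of n : Markov property
        subst hk0
        have hbt : ∀ i ∈ t, i < n := by
          intro i hi
          have h1 := hw i (by simp [hi])
          have h2 : i ≠ n := by
            intro h; subst h
            rw [List.count_eq_zero] at hct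
            exact hct hi
          omega
        have hbu : ∀ i ∈ u, i < n := by
          intro i hi
          have h1 := hw i (by simp [hi])
          have h2 : i ≠ n := fun h => hu (h ▸ hi)
          omega
        have e1 : wp (n + 1) (u ++ n :: t) =
            (wp (n + 1) u * gg (n + 1) n) * wp (n + 1) t := by
          rw [wp_append, wp_cons, mul_assoc]
        rw [WH, e1, hT.1 (n + 1) _ (wp (n + 1) t)]
        have hba : ∀ i ∈ t ++ u, i < n := by
          intro i hi
          rcases List.mem_append.mp hi with h | h
          · exact hbt i h
          · exact hbu i h
        have e2 : wp (n + 1) t * (wp (n + 1) u * gg (n + 1) n) =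
            inclB (wp n (t ++ u)) * bgen (lastGenB n) := by
          rw [inclB_wp hba, lastGen_gg, wp_append, mul_assoc]
        rw [e2, hT.2.2 n (wp n (t ++ u))]
        exact mul_mem z_mem_Rqz (ih (t ++ u) hba)
      · -- at least two occurrences
        have hmt : n ∈ t := by
          have : 0 < t.count n := by omega
          exact List.count_pos_iff.mp this
        obtain ⟨e, d, rfl, he⟩ := first_split hmt
        have hce : e.count n = 0 := List.count_eq_zero.mpr he
        have hcd : d.count n = k - 1 := by
          rw [List.count_append, List.count_cons_self, hce] at hct
          omega
        have hbe : ∀ i ∈ e, i < n := by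
          intro i hi
          have h1 := hw i (by simp [hi])
          have h2 : i ≠ n := fun h => he (h ▸ hi)
          omega
        have hbu : ∀ i ∈ u, i < n + 1 := fun i hi => hw i (by simp [hi])
        have hbd : ∀ i ∈ d, i < n + 1 := fun i hi => hw i (by simp [hi])
        have hspan := SL (n + 1) n (by omega) e hbe
        have hW : WH (n + 1) (u ++ n :: (e ++ n :: d)) =
            (WH (n + 1) u * ιHB (gg (n + 1) n)) * WH (n + 1) e *
              (ιHB (gg (n + 1) n) * WH (n + 1) d) := by
          simp only [WH_append, WH_cons, mul_assoc]
        rw [hW]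
        have hnN : n < n + 1 := by omega
        refine Submodule.span_induction
          (p := fun x _ => T (n + 1) ((WH (n + 1) u * ιHB (gg (n + 1) n)) * x *
            (ιHB (gg (n + 1) n) * WH (n + 1) d)) ∈ Rqz) ?_ ?_ ?_ ?_ hspan
        · rintro x ⟨A, B, hA, hB, (rfl | ⟨hm1, rfl⟩)⟩
          · have hA2 : ∀ i ∈ A, i + 2 ≤ n := fun i hi => by have := hA i hi; omega
            have e1 : (WH (n + 1) u * ιHB (gg (n + 1) n)) * WH (n + 1) A *
                  (ιHB (gg (n + 1) n) * WH (n + 1) d)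
                = WH (n + 1) (u ++ A) * (ιHB (gg (n + 1) n) * ιHB (gg (n + 1) n)) *
                  WH (n + 1) d := by
              simp only [WH, ← ιHB_mul, wp_append]
              refine congrArg ιHB ?_
              rw [mul_assoc (wp (n + 1) u) (gg (n + 1) n) (wp (n + 1) A), ← wp_comm hA2]
              simp only [mul_assoc]
            have e2 : WH (n + 1) (u ++ A) * (ιHB (gg (n + 1) n) * ιHB (gg (n + 1) n)) *
                  WH (n + 1) d
                = (q - 1) • WH (n + 1) (u ++ A ++ n :: d) + q • WH (n + 1) (u ++ A ++ d) := by
              rw [gg_hecke hnN, mul_add, add_mul, mul_smul_comm, smul_mul_assoc,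
                mul_smul_comm, smul_mul_assoc, mul_one]
              congr 1
              · congr 1
                simp only [WH_append, WH_cons, mul_assoc]
              · congr 1
                rw [WH_append, WH_append, WH_append]
            rw [e1, e2, map_add, map_smul, map_smul]
            have hAm : A.count n = 0 :=
              List.count_eq_zero.mpr (fun h => by have := hA n h; omega)
            refine add_mem ?_ ?_
            · rw [smul_Kz]
              refine mul_mem (Zq_map qm1_mem_Zq) (ihk _ ?_ ?_)
              · intro i hi
                simp only [List.mem_append, List.mem_cons] at hi
                rcases hi with (hi | hi) | hi | hi
                · exact hbu i hi
                · have := hA i hi; omega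
                · omega
                · exact hbd i hi
              · rw [List.count_append, List.count_append, List.count_cons_self, hcu, hcd, hAm]
                omega
            · rw [smul_Kz]
              refine mul_mem (Zq_map q_mem_Zq) (ihk _ ?_ ?_)
              · intro i hi
                simp only [List.mem_append] at hi
                rcases hi with (hi | hi) | hi
                · exact hbu i hi
                · have := hA i hi; omega
                · exact hbd i hi
              · rw [List.count_append, List.count_append, hcu, hcd, hAm]
                omega
          · have hA2 : ∀ i ∈ A, i + 2 ≤ n := fun i hi => by have := hA i hi; omega
            have hB2 : ∀ i ∈ B, i + 2 ≤ n := fun i hi => by have := hB i hi; omega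
            have e1 : (WH (n + 1) u * ιHB (gg (n + 1) n)) * WH (n + 1) (A ++ (n - 1) :: B) *
                  (ιHB (gg (n + 1) n) * WH (n + 1) d)
                = WH (n + 1) (u ++ A ++ (n - 1) :: n :: (n - 1) :: (B ++ d)) := by
              simp only [WH, ← ιHB_mul, wp_append, wp_cons]
              refine congrArg ιHB ?_
              simp only [mul_assoc]
              rw [gg_wp_comm' hA2, ← gg_wp_comm' hB2 (wp (n + 1) d),
                gg_braid' hnN (by omega : n - 1 < n + 1) (Or.inr (by omega))]
            rw [e1]
            refine ihk _ ?_ ?_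
            · intro i hi
              simp only [List.mem_append, List.mem_cons] at hi
              rcases hi with ((hi | hi) | hi | hi | hi | hi | hi)
              · exact hbu i hi
              · have := hA i hi; omega
              · omega
              · omega
              · omega
              · have := hB i hi; omega
              · exact hbd i hi
            · have hAm : A.count n = 0 :=
                List.count_eq_zero.mpr (fun h => by have := hA n h; omega)
              have hBm : B.count n = 0 :=
                List.count_eq_zero.mpr (fun h => by have := hB n h; omega)
              rw [List.count_append, List.count_append,
                List.count_cons_of_ne (by omega : n - 1 ≠ n), List.count_cons_self,
                List.count_cons_of_ne (by omega : n - 1 ≠ n), List.count_append,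
                hcu, hcd, hAm, hBm]
              omega
        · simp only [mul_zero, zero_mul, map_zero]
          exact zero_mem _
        · intro x y _ _ hx hy
          simp only [mul_add, add_mul, map_add]
          exact add_mem hx hy
        · intro a x _ hx
          rw [Subring.smul_def, mul_smul_comm, smul_mul_assoc, map_smul, smul_Kz]
          exact mul_mem (Zq_map (SetLike.coe_mem a)) hx
/-- For every `n ≥ 1` and every positive braid `β ∈ B_n⁺`, the Ocneanu
trace of `β` lies in the subring `ℤ[q, z]` of `𝕂(z)`. -/
theorem statement16 (T : TRBc) (hT : IsMarkovB T) (hnorm : T 0 1 = 1)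
    (n : ℕ) (β : BG (n + 1)) (hβ : β ∈ Bplus (n + 1)) : T n (ιHB β) ∈ Rqz := by
  obtain ⟨l, hl, hprod⟩ := Submonoid.exists_list_of_mem_closure hβ
  have hword : ∃ w : List ℕ, (∀ i ∈ w, i < n) ∧ wp n w = l.prod := by
    clear hprod
    induction l with
    | nil => exact ⟨[], by simp, by simp [wp_nil]⟩
    | cons x l ih =>
      obtain ⟨w, hw, hwp⟩ := ih (fun y hy => hl y (List.mem_cons_of_mem x hy))
      obtain ⟨j, rfl⟩ := hl x List.mem_cons_self
      refine ⟨(j : ℕ) :: w, ?_, ?_⟩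
      · intro i hi
        rcases List.mem_cons.mp hi with rfl | hi
        · exact j.isLt
        · exact hw i hi
      · rw [wp_cons, hwp, List.prod_cons]
        congr 1
        have hj : (j : ℕ) < n := j.isLt
        rw [gg, dif_pos hj]
  obtain ⟨w, hw, hwp⟩ := hword
  rw [← hprod, ← hwp]
  exact CL T hT hnorm n w hw
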